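/- If G is a connected, claw-free, cubic graph that is not isomorphic to K_4, then the vertex set V(G) can be partitioned into sets each of which induces a triangle or a diamond in G, and this partition is unique. -/

import Mathlib

/-- `G` is cubic (3-regular): every vertex has exactly 3 neighbors. -/
def IsCubic {V : Type*} (G : SimpleGraph V) : Prop := ∀ v, (G.neighborSet v).ncard = 3

/-- `G` is claw-free: it has no induced `K_{1,3}`. -/
def ClawFree {V : Type*} (G : SimpleGraph V) : Prop :=
  ¬ ∃ v a b c : V, G.Adj v a ∧ G.Adj v b ∧ G.Adj v c ∧
    a ≠ b ∧ a ≠ c ∧ b ≠ c ∧ ¬ G.Adj a b ∧ ¬ G.Adj a c ∧ ¬ G.Adj b c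

/-- The set `S` induces a triangle in `G`. -/
def InducesTriangle {V : Type*} (G : SimpleGraph V) (S : Set V) : Prop :=
  ∃ a b c : V, S = {a, b, c} ∧ a ≠ b ∧ a ≠ c ∧ b ≠ c ∧
    G.Adj a b ∧ G.Adj a c ∧ G.Adj b c

/-- The set `S` induces a diamond (`K₄` minus the edge `ab`) in `G`. -/
def InducesDiamond {V : Type*} (G : SimpleGraph V) (S : Set V) : Prop :=
  ∃ a b c d : V, S = {a, b, c, d} ∧ a ≠ b ∧ a ≠ c ∧ a ≠ d ∧ b ≠ c ∧ b ≠ d ∧ c ≠ d ∧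
    ¬ G.Adj a b ∧ G.Adj a c ∧ G.Adj a d ∧ G.Adj b c ∧ G.Adj b d ∧ G.Adj c d

set_option linter.unusedSectionVars false

namespace TDaux

variable {V : Type*} [Fintype V] {G : SimpleGraph V}

/-- `v` and `w` lie in a common triangle. -/
def Tri (G : SimpleGraph V) (v w : V) : Prop := G.Adj v w ∧ ∃ u, G.Adj v u ∧ G.Adj w u

/-- The canonical cell of `v`: vertices reachable in at most two `Tri`-steps. -/
def cell (G : SimpleGraph V) (v : V) : Set V :=
  {w | w = v ∨ Tri G v w ∨ ∃ u, Tri G v u ∧ Tri G u w}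

lemma mem_cell_self (v : V) : v ∈ cell G v := Or.inl rfl

lemma tri_comm (a b c : V) : ({b, a, c} : Set V) = {a, b, c} := by
  ext t; simp only [Set.mem_insert_iff, Set.mem_singleton_iff]; tauto

lemma tri_rot (a b c : V) : ({c, a, b} : Set V) = {a, b, c} := by
  ext t; simp only [Set.mem_insert_iff, Set.mem_singleton_iff]; tauto

lemma quad_comm1 (a b c d : V) : ({b, a, c, d} : Set V) = {a, b, c, d} := by
  ext t; simp only [Set.mem_insert_iff, Set.mem_singleton_iff]; tauto

lemma quad_comm2 (a b c d : V) : ({a, b, d, c} : Set V) = {a, b, c, d} := by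
  ext t; simp only [Set.mem_insert_iff, Set.mem_singleton_iff]; tauto

lemma ex_nbrs (hcubic : IsCubic G) (v : V) :
    ∃ a b c : V, a ≠ b ∧ a ≠ c ∧ b ≠ c ∧ ∀ w, G.Adj v w ↔ (w = a ∨ w = b ∨ w = c) := by
  obtain ⟨a, b, c, hab, hac, hbc, h⟩ := Set.ncard_eq_three.mp (hcubic v)
  refine ⟨a, b, c, hab, hac, hbc, fun w => ?_⟩
  have : G.Adj v w ↔ w ∈ G.neighborSet v := by simp
  rw [this, h]; simp

lemma nbr_only (hcubic : IsCubic G) {v a b c : V} (ha : G.Adj v a) (hb : G.Adj v b)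
    (hc : G.Adj v c) (hab : a ≠ b) (hac : a ≠ c) (hbc : b ≠ c) :
    ∀ w, G.Adj v w → w = a ∨ w = b ∨ w = c := by
  have hsub : ({a, b, c} : Set V) ⊆ G.neighborSet v := by
    intro x hx
    rcases hx with rfl | hx
    · exact ha
    rcases hx with rfl | hx
    · exact hb
    rcases hx with rfl
    · exact hc
  have h3 : ({a, b, c} : Set V).ncard = 3 := Set.ncard_eq_three.mpr ⟨a, b, c, hab, hac, hbc, rfl⟩
  have heq : ({a, b, c} : Set V) = G.neighborSet v :=
    Set.eq_of_subset_of_ncard_le hsub (by rw [hcubic v, h3]) (Set.toFinite _)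
  intro w hw
  have : w ∈ ({a, b, c} : Set V) := by rw [heq]; exact hw
  simpa using this

lemma no_K4 (hconn : G.Connected) (hcubic : IsCubic G)
    {v a b c : V} (hva : G.Adj v a) (hvb : G.Adj v b) (hvc : G.Adj v c)
    (hab' : a ≠ b) (hac' : a ≠ c) (hbc' : b ≠ c)
    (hab : G.Adj a b) (hac : G.Adj a c) (hbc : G.Adj b c) :
    Nonempty (G ≃g (⊤ : SimpleGraph (Fin 4))) := by
  classical
  have nv := nbr_only hcubic hva hvb hvc hab' hac' hbc'
  have na := nbr_only hcubic hva.symm hab hac hvb.ne hvc.ne hbc'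
  have nb := nbr_only hcubic hvb.symm hab.symm hbc hva.ne hvc.ne hac'
  have nc := nbr_only hcubic hvc.symm hac.symm hbc.symm hva.ne hvb.ne hab'
  have hall : ∀ y : V, y = v ∨ y = a ∨ y = b ∨ y = c := by
    have key : ∀ (x y : V) (_ : G.Walk x y),
        (x = v ∨ x = a ∨ x = b ∨ x = c) → (y = v ∨ y = a ∨ y = b ∨ y = c) := by
      intro x y p
      induction p with
      | nil => exact id
      | cons hadj p ih =>
        intro hx
        apply ih
        rcases hx with rfl | rfl | rfl | rfl
        · rcases nv _ hadj with h | h | h <;> tauto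
        · rcases na _ hadj with h | h | h <;> tauto
        · rcases nb _ hadj with h | h | h <;> tauto
        · rcases nc _ hadj with h | h | h <;> tauto
    intro y
    obtain ⟨p⟩ := hconn.preconnected v y
    exact key v y p (Or.inl rfl)
  have hadjne : ∀ x y : V, x ≠ y → G.Adj x y := by
    intro x y hxy
    rcases hall x with rfl | rfl | rfl | rfl <;> rcases hall y with rfl | rfl | rfl | rfl <;>
      first
        | exact absurd rfl hxy
        | exact hva | exact hvb | exact hvc | exact hab | exact hac | exact hbc
        | exact hva.symm | exact hvb.symm | exact hvc.symm
        | exact hab.symm | exact hac.symm | exact hbc.symm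
  have e : V ≃ Fin 4 := by
    refine ⟨fun y => if y = v then 0 else if y = a then 1 else if y = b then 2 else 3,
      fun i => if i = 0 then v else if i = 1 then a else if i = 2 then b else c, ?_, ?_⟩
    · intro y
      rcases hall y with rfl | rfl | rfl | rfl <;>
        simp_all [hva.ne', hvb.ne', hvc.ne', hab', hac', hbc', Ne.symm hab', Ne.symm hac',
          Ne.symm hbc']
    · intro i
      fin_cases i <;> simp_all [hva.ne', hvb.ne', hvc.ne', hab', hac', hbc', Ne.symm hab', Ne.symm hac', Ne.symm hbc']
  refine ⟨⟨e, ?_⟩⟩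
  intro x y
  simp only [SimpleGraph.top_adj]
  constructor
  · intro h
    exact hadjne x y (fun hh => h (by rw [hh]))
  · intro h
    exact fun hh => h.ne (e.injective hh)

/-- Classification of the neighborhood of a vertex: neighbors `a,b,c` with
`a-b` an edge and `b-c` a non-edge. -/
lemma nbhd (hconn : G.Connected) (hcf : ClawFree G) (hcubic : IsCubic G)
    (hK4 : ¬ Nonempty (G ≃g (⊤ : SimpleGraph (Fin 4)))) (v : V) :
    ∃ a b c : V, G.Adj v a ∧ G.Adj v b ∧ G.Adj v c ∧ a ≠ b ∧ a ≠ c ∧ b ≠ c ∧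
      (∀ w, G.Adj v w → w = a ∨ w = b ∨ w = c) ∧ G.Adj a b ∧ ¬ G.Adj b c := by
  obtain ⟨a, b, c, hab, hac, hbc, hiff⟩ := ex_nbrs hcubic v
  have hva : G.Adj v a := (hiff a).mpr (Or.inl rfl)
  have hvb : G.Adj v b := (hiff b).mpr (Or.inr (Or.inl rfl))
  have hvc : G.Adj v c := (hiff c).mpr (Or.inr (Or.inr rfl))
  have hall : ∀ w, G.Adj v w → w = a ∨ w = b ∨ w = c := fun w hw => (hiff w).mp hw
  have hedge : G.Adj a b ∨ G.Adj a c ∨ G.Adj b c := by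
    by_contra h
    push_neg at h
    exact hcf ⟨v, a, b, c, hva, hvb, hvc, hab, hac, hbc, h.1, h.2.1, h.2.2⟩
  have hnall : ¬ (G.Adj a b ∧ G.Adj a c ∧ G.Adj b c) := by
    rintro ⟨h1, h2, h3⟩
    exact hK4 (no_K4 hconn hcubic hva hvb hvc hab hac hbc h1 h2 h3)
  by_cases h1 : G.Adj a b
  · by_cases h3 : G.Adj b c
    · by_cases h2 : G.Adj a c
      · exact absurd ⟨h1, h2, h3⟩ hnall
      · exact ⟨b, a, c, hvb, hva, hvc, Ne.symm hab, hbc, hac, fun w hw => by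
          rcases hall w hw with h | h | h <;> tauto, h1.symm, h2⟩
    · exact ⟨a, b, c, hva, hvb, hvc, hab, hac, hbc, hall, h1, h3⟩
  · by_cases h2 : G.Adj a c
    · by_cases h3 : G.Adj b c
      · exact ⟨c, a, b, hvc, hva, hvb, Ne.symm hac, Ne.symm hbc, hab, fun w hw => by
          rcases hall w hw with h | h | h <;> tauto, h2.symm, h1⟩
      · exact ⟨a, c, b, hva, hvc, hvb, hac, hab, Ne.symm hbc, fun w hw => by
          rcases hall w hw with h | h | h <;> tauto, h2, fun h => h3 h.symm⟩
    · by_cases h3 : G.Adj b c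
      · exact ⟨b, c, a, hvb, hvc, hva, hbc, Ne.symm hab, Ne.symm hac, fun w hw => by
          rcases hall w hw with h | h | h <;> tauto, h3, fun h => h2 h.symm⟩
      · exact absurd hedge (by tauto)

lemma tri_only (hcubic : IsCubic G) {v a b : V} (hva : G.Adj v a) (hvb : G.Adj v b)
    (hab : G.Adj a b)
    (h1 : ∀ u, G.Adj v u → G.Adj a u → u = b)
    (h2 : ∀ u, G.Adj v u → G.Adj b u → u = a) :
    ∀ w, Tri G v w → w = a ∨ w = b := by
  rintro w ⟨hvw, u, hvu, hwu⟩
  by_contra hcon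
  push_neg at hcon
  obtain ⟨hwa, hwb⟩ := hcon
  have hn := nbr_only hcubic hva hvb hvw hab.ne (Ne.symm hwa) (Ne.symm hwb)
  rcases hn u hvu with h | h | h
  · rw [h] at hwu
    exact hwb (h1 w hvw hwu.symm)
  · rw [h] at hwu
    exact hwa (h2 w hvw hwu.symm)
  · rw [h] at hwu
    exact G.loopless.irrefl w hwu

lemma H1 (hcubic : IsCubic G) {v a b : V} (hva : G.Adj v a) (hvb : G.Adj v b)
    (hab : G.Adj a b)
    (h1 : ∀ u, G.Adj v u → G.Adj a u → u = b)
    (h2 : ∀ u, G.Adj v u → G.Adj b u → u = a)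
    (h3 : ∀ u, G.Adj a u → G.Adj b u → u = v) :
    cell G v = {v, a, b} := by
  have tv := tri_only hcubic hva hvb hab h1 h2
  have ta := tri_only hcubic hva.symm hab hvb (fun u h h' => h1 u h' h) h3
  have tb := tri_only hcubic hvb.symm hab.symm hva (fun u h h' => h2 u h' h)
    (fun u h h' => h3 u h' h)
  ext w
  simp only [Set.mem_insert_iff, Set.mem_singleton_iff]
  constructor
  · rintro (h | hw | ⟨u, hu, hw⟩)
    · tauto
    · rcases tv w hw with h | h <;> tauto
    · rcases tv u hu with h | h
      · rw [h] at hw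
        rcases ta w hw with h' | h' <;> tauto
      · rw [h] at hw
        rcases tb w hw with h' | h' <;> tauto
  · rintro (h | h | h) <;> rw [h]
    · exact mem_cell_self v
    · exact Or.inr (Or.inl ⟨hva, b, hvb, hab⟩)
    · exact Or.inr (Or.inl ⟨hvb, a, hva, hab.symm⟩)

section H2

variable {p q r s : V}

lemma dia_tri_ext (hcubic : IsCubic G) (hpq : ¬ G.Adj p q) (hpq' : p ≠ q)
    (hpr : G.Adj p r) (hps : G.Adj p s) (hqr : G.Adj q r) (hqs : G.Adj q s)
    (hrs : G.Adj r s) :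
    ∀ w, Tri G p w → w = r ∨ w = s := by
  have hrn := nbr_only hcubic hpr.symm hqr.symm hrs hpq' hps.ne hqs.ne
  have hsn := nbr_only hcubic hps.symm hqs.symm hrs.symm hpq' hpr.ne hqr.ne
  rintro w ⟨hpw, u, hpu, hwu⟩
  by_contra hcon
  push_neg at hcon
  obtain ⟨hwr, hws⟩ := hcon
  have hn := nbr_only hcubic hpr hps hpw hrs.ne (Ne.symm hwr) (Ne.symm hws)
  rcases hn u hpu with h | h | h
  · have hrw : G.Adj r w := by rw [← h]; exact hwu.symm
    rcases hrn w hrw with h' | h' | h'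
    · exact hpw.ne' h'
    · exact hpq (by rw [← h']; exact hpw)
    · exact hws h'
  · have hsw : G.Adj s w := by rw [← h]; exact hwu.symm
    rcases hsn w hsw with h' | h' | h'
    · exact hpw.ne' h'
    · exact hpq (by rw [← h']; exact hpw)
    · exact hwr h'
  · rw [h] at hwu
    exact G.loopless.irrefl w hwu

lemma H2_int (hcubic : IsCubic G) (hpq : ¬ G.Adj p q) (hpq' : p ≠ q)
    (hpr : G.Adj p r) (hps : G.Adj p s) (hqr : G.Adj q r) (hqs : G.Adj q s)
    (hrs : G.Adj r s) :
    cell G r = {p, q, r, s} := by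
  have tp := dia_tri_ext hcubic hpq hpq' hpr hps hqr hqs hrs
  have tq := dia_tri_ext hcubic (fun h => hpq h.symm) (Ne.symm hpq') hqr hqs hpr hps hrs
  have tr : ∀ w, Tri G r w → w = p ∨ w = q ∨ w = s := fun w hw =>
    nbr_only hcubic hpr.symm hqr.symm hrs hpq' hps.ne hqs.ne w hw.1
  have ts : ∀ w, Tri G s w → w = p ∨ w = q ∨ w = r := fun w hw =>
    nbr_only hcubic hps.symm hqs.symm hrs.symm hpq' hpr.ne hqr.ne w hw.1
  ext w
  simp only [Set.mem_insert_iff, Set.mem_singleton_iff]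
  constructor
  · rintro (h | hw | ⟨u, hu, hw⟩)
    · tauto
    · rcases tr w hw with h | h | h <;> tauto
    · rcases tr u hu with h | h | h
      · rw [h] at hw
        rcases tp w hw with h' | h' <;> tauto
      · rw [h] at hw
        rcases tq w hw with h' | h' <;> tauto
      · rw [h] at hw
        rcases ts w hw with h' | h' | h' <;> tauto
  · rintro (h | h | h | h) <;> rw [h]
    · exact Or.inr (Or.inl ⟨hpr.symm, s, hrs, hps⟩)
    · exact Or.inr (Or.inl ⟨hqr.symm, s, hrs, hqs⟩)
    · exact mem_cell_self r
    · exact Or.inr (Or.inl ⟨hrs, p, hpr.symm, hps.symm⟩)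

lemma H2_ext (hcubic : IsCubic G) (hpq : ¬ G.Adj p q) (hpq' : p ≠ q)
    (hpr : G.Adj p r) (hps : G.Adj p s) (hqr : G.Adj q r) (hqs : G.Adj q s)
    (hrs : G.Adj r s) :
    cell G p = {p, q, r, s} := by
  have tp := dia_tri_ext hcubic hpq hpq' hpr hps hqr hqs hrs
  have tr : ∀ w, Tri G r w → w = p ∨ w = q ∨ w = s := fun w hw =>
    nbr_only hcubic hpr.symm hqr.symm hrs hpq' hps.ne hqs.ne w hw.1
  have ts : ∀ w, Tri G s w → w = p ∨ w = q ∨ w = r := fun w hw =>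
    nbr_only hcubic hps.symm hqs.symm hrs.symm hpq' hpr.ne hqr.ne w hw.1
  ext w
  simp only [Set.mem_insert_iff, Set.mem_singleton_iff]
  constructor
  · rintro (h | hw | ⟨u, hu, hw⟩)
    · tauto
    · rcases tp w hw with h | h <;> tauto
    · rcases tp u hu with h | h
      · rw [h] at hw
        rcases tr w hw with h' | h' | h' <;> tauto
      · rw [h] at hw
        rcases ts w hw with h' | h' | h' <;> tauto
  · rintro (h | h | h | h) <;> rw [h]
    · exact mem_cell_self p
    · exact Or.inr (Or.inr ⟨r, ⟨hpr, s, hps, hrs⟩, hqr.symm, s, hrs, hqs⟩)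
    · exact Or.inr (Or.inl ⟨hpr, s, hps, hrs⟩)
    · exact Or.inr (Or.inl ⟨hps, r, hpr, hrs.symm⟩)

end H2

/-- The main structure lemma: each cell is a triangle or diamond, and cells of its
members coincide with it. -/
lemma cell_good (hconn : G.Connected) (hcf : ClawFree G) (hcubic : IsCubic G)
    (hK4 : ¬ Nonempty (G ≃g (⊤ : SimpleGraph (Fin 4)))) (v : V) :
    (InducesTriangle G (cell G v) ∨ InducesDiamond G (cell G v)) ∧
    ∀ w ∈ cell G v, cell G w = cell G v := by
  obtain ⟨a, b, c, hva, hvb, hvc, hab', hac', hbc', hall, hab, hnbc⟩ :=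
    nbhd hconn hcf hcubic hK4 v
  by_cases hac : G.Adj a c
  · -- diamond on {b, c, v, a}, with non-edge b-c
    have e1 : cell G v = {b, c, v, a} :=
      H2_int hcubic hnbc hbc' hvb.symm hab.symm hvc.symm hac.symm hva
    constructor
    · right
      exact ⟨b, c, v, a, e1, hbc', hvb.ne', hab.ne', hvc.ne', hac.ne', hva.ne, hnbc,
        hvb.symm, hab.symm, hvc.symm, hac.symm, hva⟩
    · intro w hw
      rw [e1] at hw
      simp only [Set.mem_insert_iff, Set.mem_singleton_iff] at hw
      rcases hw with h | h | h | h <;> rw [h]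
      · exact (H2_ext hcubic hnbc hbc' hvb.symm hab.symm hvc.symm hac.symm hva).trans e1.symm
      · exact (H2_ext hcubic (fun hh => hnbc hh.symm) (Ne.symm hbc') hvc.symm hac.symm
          hvb.symm hab.symm hva).trans ((quad_comm1 b c v a).trans e1.symm)
      · exact (H2_int hcubic hnbc hbc' hab.symm hvb.symm hac.symm hvc.symm hva.symm).trans
          ((quad_comm2 b c v a).trans e1.symm)
  · by_cases hax : ∃ x, G.Adj a x ∧ G.Adj b x ∧ x ≠ v
    · obtain ⟨x, hax', hbx, hxv⟩ := hax
      have hnvx : ¬ G.Adj v x := by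
        intro h
        rcases hall x h with h' | h' | h'
        · rw [h'] at hax'; exact G.loopless.irrefl a hax'
        · rw [h'] at hbx; exact G.loopless.irrefl b hbx
        · rw [h'] at hax'; exact hac hax'
      have hvx' : v ≠ x := Ne.symm hxv
      -- diamond on {v, x, a, b}, with non-edge v-x
      have e1 : cell G v = {v, x, a, b} :=
        H2_ext hcubic hnvx hvx' hva hvb hax'.symm hbx.symm hab
      constructor
      · right
        exact ⟨v, x, a, b, e1, hvx', hva.ne, hvb.ne, hax'.ne', hbx.ne', hab.ne, hnvx,
          hva, hvb, hax'.symm, hbx.symm, hab⟩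
      · intro w hw
        rw [e1] at hw
        simp only [Set.mem_insert_iff, Set.mem_singleton_iff] at hw
        rcases hw with h | h | h | h <;> rw [h]
        · exact (H2_ext hcubic (fun hh => hnvx hh.symm) hxv hax'.symm hbx.symm hva hvb
            hab).trans ((quad_comm1 v x a b).trans e1.symm)
        · exact (H2_int hcubic hnvx hvx' hva hvb hax'.symm hbx.symm hab).trans e1.symm
        · exact (H2_int hcubic hnvx hvx' hvb hva hbx.symm hax'.symm hab.symm).trans
            ((quad_comm2 v x a b).trans e1.symm)
    · -- isolated triangle {v, a, b}
      have h3 : ∀ u, G.Adj a u → G.Adj b u → u = v := by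
        intro u h h'
        by_contra hne
        exact hax ⟨u, h, h', hne⟩
      have h1 : ∀ u, G.Adj v u → G.Adj a u → u = b := by
        intro u hu h'
        rcases hall u hu with h | h | h
        · rw [h] at h'; exact absurd h' (G.loopless.irrefl a)
        · exact h
        · rw [h] at h'; exact absurd h' hac
      have h2 : ∀ u, G.Adj v u → G.Adj b u → u = a := by
        intro u hu h'
        rcases hall u hu with h | h | h
        · exact h
        · rw [h] at h'; exact absurd h' (G.loopless.irrefl b)
        · rw [h] at h'; exact absurd h' hnbc
      have e1 : cell G v = {v, a, b} := H1 hcubic hva hvb hab h1 h2 h3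
      constructor
      · left
        exact ⟨v, a, b, e1, hva.ne, hvb.ne, hab.ne, hva, hvb, hab⟩
      · intro w hw
        rw [e1] at hw
        simp only [Set.mem_insert_iff, Set.mem_singleton_iff] at hw
        rcases hw with h | h | h <;> rw [h]
        · exact (H1 hcubic hva.symm hab hvb (fun u hu h' => h1 u h' hu) h3 h2).trans
            ((tri_comm v a b).trans e1.symm)
        · exact (H1 hcubic hvb.symm hab.symm hva (fun u hu h' => h2 u h' hu)
            (fun u hu h' => h3 u h' hu) h1).trans ((tri_rot v a b).trans e1.symm)

lemma shape_tri {S : Set V} (h : InducesTriangle G S ∨ InducesDiamond G S) {x : V}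
    (hx : x ∈ S) :
    ∃ y z, y ∈ S ∧ z ∈ S ∧ G.Adj x y ∧ G.Adj x z ∧ G.Adj y z := by
  rcases h with ⟨a, b, c, hSe, hab, hac, hbc, aab, aac, abc⟩ |
    ⟨a, b, c, d, hSe, h1, h2, h3, h4, h5, h6, nab, aac, aad, abc, abd, acd⟩
  · rw [hSe] at hx ⊢
    simp only [Set.mem_insert_iff, Set.mem_singleton_iff] at hx
    rcases hx with h | h | h <;> rw [h]
    · exact ⟨b, c, by simp, by simp, aab, aac, abc⟩
    · exact ⟨a, c, by simp, by simp, aab.symm, abc, aac⟩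
    · exact ⟨a, b, by simp, by simp, aac.symm, abc.symm, aab⟩
  · rw [hSe] at hx ⊢
    simp only [Set.mem_insert_iff, Set.mem_singleton_iff] at hx
    rcases hx with h | h | h | h <;> rw [h]
    · exact ⟨c, d, by simp, by simp, aac, aad, acd⟩
    · exact ⟨c, d, by simp, by simp, abc, abd, acd⟩
    · exact ⟨a, d, by simp, by simp, aac.symm, acd, aad⟩
    · exact ⟨a, c, by simp, by simp, aad.symm, acd.symm, aac⟩

lemma part_no_common (hcubic : IsCubic G) {Q : Set (Set V)} (hpart : Setoid.IsPartition Q)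
    (hshape : ∀ S ∈ Q, InducesTriangle G S ∨ InducesDiamond G S)
    {S : Set V} (hS : S ∈ Q) {x y z : V} (hSe : S = {x, y, z})
    (axy : G.Adj x y) (axz : G.Adj x z) (ayz : G.Adj y z) :
    ∀ u, G.Adj y u → G.Adj z u → u = x := by
  intro u huy huz
  by_contra hux
  have huS : u ∉ S := by
    rw [hSe]
    simp only [Set.mem_insert_iff, Set.mem_singleton_iff]
    push_neg
    exact ⟨hux, huy.ne', huz.ne'⟩
  obtain ⟨T, ⟨hTQ, huT⟩, -⟩ := hpart.2 u
  have hTS : ∀ w, w ∈ T → w ∈ S → False := by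
    intro w hwT hwS
    obtain ⟨W, -, hWu⟩ := hpart.2 w
    have e1 := hWu T ⟨hTQ, hwT⟩
    have e2 := hWu S ⟨hS, hwS⟩
    have : T = S := e1.trans e2.symm
    rw [this] at huT
    exact huS huT
  obtain ⟨y', z', hy'T, hz'T, huy', huz', hy'z'⟩ := shape_tri (hshape T hTQ) huT
  have hyS : y ∈ S := by rw [hSe]; simp
  have hzS : z ∈ S := by rw [hSe]; simp
  have hy'y : y' ≠ y := fun h => hTS y' hy'T (by rw [h]; exact hyS)
  have hy'z : y' ≠ z := fun h => hTS y' hy'T (by rw [h]; exact hzS)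
  have hn := nbr_only hcubic huy.symm huz.symm huy' ayz.ne (Ne.symm hy'y) (Ne.symm hy'z)
  rcases hn z' huz' with h | h | h
  · exact hTS z' hz'T (by rw [h]; exact hyS)
  · exact hTS z' hz'T (by rw [h]; exact hzS)
  · exact hy'z'.ne' h

lemma part_eq_cell (hcubic : IsCubic G) {Q : Set (Set V)} (hpart : Setoid.IsPartition Q)
    (hshape : ∀ S ∈ Q, InducesTriangle G S ∨ InducesDiamond G S) :
    ∀ S ∈ Q, ∀ v ∈ S, S = cell G v := by
  intro S hS v hv
  rcases hshape S hS with ⟨p, q, r, hSe, hpq, hpr, hqr, apq, apr, aqr⟩ |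
    ⟨p, q, r, s, hSe, n1, n2, n3, n4, n5, n6, npq, apr, aps, aqr, aqs, ars⟩
  · have c1 := part_no_common hcubic hpart hshape hS hSe apq apr aqr
    have hSe2 : S = {q, p, r} := hSe.trans (tri_comm p q r).symm
    have c2 := part_no_common hcubic hpart hshape hS hSe2 apq.symm aqr apr
    have hSe3 : S = {r, p, q} := hSe.trans (tri_rot p q r).symm
    have c3 := part_no_common hcubic hpart hshape hS hSe3 apr.symm aqr.symm apq
    have ep : cell G p = {p, q, r} := H1 hcubic apq apr aqr c3 c2 c1
    have eq' : cell G q = {q, p, r} :=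
      H1 hcubic apq.symm aqr apr (fun u h h' => c3 u h' h) c1 c2
    have er : cell G r = {r, p, q} :=
      H1 hcubic apr.symm aqr.symm apq (fun u h h' => c2 u h' h) (fun u h h' => c1 u h' h) c3
    rw [hSe] at hv
    simp only [Set.mem_insert_iff, Set.mem_singleton_iff] at hv
    rcases hv with h | h | h <;> rw [h]
    · exact hSe.trans ep.symm
    · exact hSe2.trans eq'.symm
    · exact hSe3.trans er.symm
  · have ep := H2_ext hcubic npq n1 apr aps aqr aqs ars
    have eq' := H2_ext hcubic (fun h => npq h.symm) (Ne.symm n1) aqr aqs apr aps ars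
    have er := H2_int hcubic npq n1 apr aps aqr aqs ars
    have es := H2_int hcubic npq n1 aps apr aqs aqr ars.symm
    rw [hSe] at hv
    simp only [Set.mem_insert_iff, Set.mem_singleton_iff] at hv
    rcases hv with h | h | h | h <;> rw [h]
    · exact hSe.trans ep.symm
    · exact hSe.trans (eq'.trans (quad_comm1 p q r s)).symm
    · exact hSe.trans er.symm
    · exact hSe.trans (es.trans (quad_comm2 p q r s)).symm

end TDaux

/-- If `G ≠ K₄` is a connected, claw-free, cubic graph, then `V(G)` has a unique
partition into sets each of which induces a triangle or a diamond in `G`. -/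
theorem exists_unique_triangle_diamond_partition {V : Type*} [Fintype V]
    (G : SimpleGraph V) (hconn : G.Connected) (hcf : ClawFree G) (hcubic : IsCubic G)
    (hK4 : ¬ Nonempty (G ≃g (⊤ : SimpleGraph (Fin 4)))) :
    ∃! P : Set (Set V), Setoid.IsPartition P ∧
      ∀ S ∈ P, InducesTriangle G S ∨ InducesDiamond G S := by
  refine ⟨Set.range (TDaux.cell G), ⟨⟨?_, ?_⟩, ?_⟩, ?_⟩
  · rintro ⟨v, hv⟩
    have := TDaux.mem_cell_self (G := G) v
    rw [hv] at this
    exact this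
  · intro w
    refine ⟨TDaux.cell G w, ⟨⟨w, rfl⟩, TDaux.mem_cell_self w⟩, ?_⟩
    rintro S ⟨⟨v, rfl⟩, hwS⟩
    exact ((TDaux.cell_good hconn hcf hcubic hK4 v).2 w hwS).symm
  · rintro S ⟨v, rfl⟩
    exact (TDaux.cell_good hconn hcf hcubic hK4 v).1
  · rintro Q ⟨hQpart, hQshape⟩
    ext S
    simp only [Set.mem_range]
    constructor
    · intro hSQ
      have hne : S.Nonempty := by
        rcases S.eq_empty_or_nonempty with h | h
        · rw [h] at hSQ
          exact absurd hSQ hQpart.1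
        · exact h
      obtain ⟨v, hv⟩ := hne
      exact ⟨v, (TDaux.part_eq_cell hcubic hQpart hQshape S hSQ v hv).symm⟩
    · rintro ⟨v, rfl⟩
      obtain ⟨T, ⟨hTQ, hvT⟩, -⟩ := hQpart.2 v
      have := TDaux.part_eq_cell hcubic hQpart hQshape T hTQ v hvT
      rw [← this]
      exact hTQ
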